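/- For every α, β > 0 and q ∈ ℕ there is a constant δ = δ(α, β, q) > 0 such that the following holds. Let X₁, …, X_m be finite sets with |X_i| ≤ q, let X = X₁ × ⋯ × X_m, and let Y ⊆ X with |Y| ≥ 2^{−δm}|X|. Call an index i ∈ [m] α-unbiased if for every j ∈ X_i, (1/(1+α))·Pr_{y∈X}[y ∈ Y] ≤ Pr_{y∈X}[y ∈ Y | y_i = j] ≤ (1+α)·Pr_{y∈X}[y ∈ Y]. Then at most βm indices in [m] fail to be α-unbiased. -/

import Mathlib

open Finset

private lemma g_nonneg {t : ℝ} (ht : 0 ≤ t) : 0 ≤ t * Real.log t - t + 1 := by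
  rcases eq_or_lt_of_le ht with h | h
  · simp [← h]
  · have h1 := Real.log_le_sub_one_of_pos (inv_pos.mpr h)
    rw [Real.log_inv] at h1
    have h2 : t * t⁻¹ = 1 := mul_inv_cancel₀ h.ne'
    nlinarith [mul_le_mul_of_nonneg_left h1 h.le]

private lemma g_pos {t : ℝ} (ht : 0 < t) (hne : t ≠ 1) : 0 < t * Real.log t - t + 1 := by
  have h1 := Real.log_lt_sub_one_of_pos (inv_pos.mpr ht) (by simpa using hne)
  rw [Real.log_inv] at h1
  have h2 : t * t⁻¹ = 1 := mul_inv_cancel₀ ht.ne'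
  nlinarith [mul_lt_mul_of_pos_left h1 ht]

private lemma g_deriv {x : ℝ} (hx : x ≠ 0) :
    HasDerivAt (fun t : ℝ => t * Real.log t - t + 1) (Real.log x) x := by
  have h := ((Real.hasDerivAt_mul_log hx).sub (hasDerivAt_id x)).add_const 1
  simpa using h

private lemma g_mono : MonotoneOn (fun t : ℝ => t * Real.log t - t + 1) (Set.Ici 1) := by
  apply monotoneOn_of_deriv_nonneg (convex_Ici 1)
  · exact ((Real.continuous_mul_log.sub continuous_id).add continuous_const).continuousOn
  · intro x hx
    rw [interior_Ici] at hx
    exact (g_deriv (ne_of_gt (lt_trans one_pos hx))).differentiableAt.differentiableWithinAt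
  · intro x hx
    rw [interior_Ici] at hx
    rw [(g_deriv (ne_of_gt (lt_trans one_pos hx))).deriv]
    exact Real.log_nonneg hx.le

private lemma g_anti : AntitoneOn (fun t : ℝ => t * Real.log t - t + 1) (Set.Icc 0 1) := by
  apply antitoneOn_of_deriv_nonpos (convex_Icc 0 1)
  · exact ((Real.continuous_mul_log.sub continuous_id).add continuous_const).continuousOn
  · intro x hx
    rw [interior_Icc] at hx
    exact (g_deriv (ne_of_gt hx.1)).differentiableAt.differentiableWithinAt
  · intro x hx
    rw [interior_Icc] at hx
    rw [(g_deriv (ne_of_gt hx.1)).deriv]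
    exact Real.log_nonpos hx.1.le hx.2.le

private lemma fiber_card {m : ℕ} (X : Fin m → Type) [∀ i, Fintype (X i)]
    [∀ i, DecidableEq (X i)] (i : Fin m) (j : X i) :
    ((Finset.univ.filter fun y : ∀ k, X k => y i = j).card) * Fintype.card (X i)
      = Fintype.card (∀ k, X k) := by
  classical
  rw [← Finset.card_univ (α := ∀ k, X k)]
  rw [← Finset.card_univ (α := X i)]
  rw [← Finset.card_product]
  apply Finset.card_bij' (fun p _ => Function.update p.1 i p.2)
    (fun y _ => (Function.update y i j, y i))
  · intro a _; exact Finset.mem_univ _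
  · intro y _
    simp only [Finset.mem_product, Finset.mem_filter, Finset.mem_univ, true_and]
    exact ⟨Function.update_self i j y, trivial⟩
  · intro a ha
    simp only [Finset.mem_product, Finset.mem_filter, Finset.mem_univ, true_and] at ha
    ext1
    · simp [Function.update_idem, ← ha.1, Function.update_eq_self]
    · simp
  · intro y _
    simp [Function.update_idem, Function.update_eq_self]

open Finset

private lemma subadd {m : ℕ} {X : Fin m → Type} [∀ i, Fintype (X i)] [∀ i, DecidableEq (X i)]
    (Y : Finset (∀ i, X i)) (hY : Y.Nonempty) :
    Real.log Y.card ≤ ∑ i, ∑ j : X i,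
      -((((Y.filter fun y => y i = j).card : ℝ) / (Y.card : ℝ)) *
        Real.log (((Y.filter fun y => y i = j).card : ℝ) / (Y.card : ℝ))) := by
  classical
  set N : ℝ := (Y.card : ℝ) with hNdef
  have hN : 0 < N := by
    rw [hNdef]
    exact_mod_cast Finset.card_pos.mpr hY
  set p : ∀ i, X i → ℝ := fun i j => ((Y.filter fun y => y i = j).card : ℝ) / N with hpdef
  have hp0 : ∀ (i) (j : X i), 0 ≤ p i j := fun i j => by positivity
  have hpsum : ∀ i, ∑ j : X i, p i j = 1 := by
    intro i
    have hcard : ∑ j : X i, ((Y.filter fun y => y i = j).card : ℝ) = N := by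
      rw [hNdef, ← Nat.cast_sum]
      congr 1
      exact (Finset.card_eq_sum_card_fiberwise (fun y _ => Finset.mem_univ (y i))).symm
    simp only [hpdef]
    rw [← Finset.sum_div, hcard, div_self hN.ne']
  have hpy : ∀ (i : Fin m), ∀ y ∈ Y, 0 < p i (y i) := by
    intro i y hy
    apply div_pos _ hN
    have h0 : 0 < (Y.filter fun z => z i = y i).card :=
      Finset.card_pos.mpr ⟨y, Finset.mem_filter.mpr ⟨hy, rfl⟩⟩
    exact Nat.cast_pos.mpr h0
  have hPy : ∀ y ∈ Y, 0 < ∏ i, p i (y i) := fun y hy =>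
    Finset.prod_pos fun i _ => hpy i y hy
  have h1 : ∑ y ∈ Y, (1 / N) * Real.log (N * ∏ i, p i (y i)) ≤ 0 := by
    calc ∑ y ∈ Y, (1 / N) * Real.log (N * ∏ i, p i (y i))
        ≤ ∑ y ∈ Y, ((∏ i, p i (y i)) - 1 / N) := by
          apply Finset.sum_le_sum
          intro y hy
          have hlog := Real.log_le_sub_one_of_pos (mul_pos hN (hPy y hy))
          have h := mul_le_mul_of_nonneg_left hlog (le_of_lt (one_div_pos.mpr hN))
          have heq : (1 / N) * (N * (∏ i, p i (y i)) - 1) = (∏ i, p i (y i)) - 1 / N := by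
            field_simp
          linarith [heq ▸ h]
      _ = (∑ y ∈ Y, ∏ i, p i (y i)) - 1 := by
          rw [Finset.sum_sub_distrib, Finset.sum_const, nsmul_eq_mul]
          congr 1
          rw [hNdef, mul_one_div, div_self hN.ne']
      _ ≤ (∑ y : ∀ i, X i, ∏ i, p i (y i)) - 1 := by
          apply sub_le_sub_right
          exact Finset.sum_le_sum_of_subset_of_nonneg (Finset.subset_univ Y)
            (fun y _ _ => Finset.prod_nonneg fun i _ => hp0 i (y i))
      _ = (∏ i, ∑ j : X i, p i j) - 1 := by rw [Fintype.prod_sum]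
      _ = 0 := by simp [hpsum]
  have h2 : ∑ y ∈ Y, (1 / N) * Real.log (N * ∏ i, p i (y i))
      = Real.log N + ∑ i, ∑ j : X i, (p i j * Real.log (p i j)) := by
    have hlogsplit : ∀ y ∈ Y, Real.log (N * ∏ i, p i (y i))
        = Real.log N + ∑ i, Real.log (p i (y i)) := by
      intro y hy
      rw [Real.log_mul hN.ne' (hPy y hy).ne', Real.log_prod]
      intro i _
      exact (hpy i y hy).ne'
    calc ∑ y ∈ Y, (1 / N) * Real.log (N * ∏ i, p i (y i))
        = ∑ y ∈ Y, ((1 / N) * Real.log N + ∑ i, (1 / N) * Real.log (p i (y i))) := by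
          apply Finset.sum_congr rfl
          intro y hy
          rw [hlogsplit y hy, mul_add, Finset.mul_sum]
      _ = (∑ y ∈ Y, (1 / N) * Real.log N)
            + ∑ i, ∑ y ∈ Y, (1 / N) * Real.log (p i (y i)) := by
          rw [Finset.sum_add_distrib, Finset.sum_comm]
      _ = Real.log N + ∑ i, ∑ j : X i, (p i j * Real.log (p i j)) := by
          congr 1
          · rw [Finset.sum_const, nsmul_eq_mul, ← hNdef]
            field_simp
          · apply Finset.sum_congr rfl
            intro i _
            rw [← Finset.sum_fiberwise' Y (fun y => y i)
              (fun j => (1 / N) * Real.log (p i j))]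
            apply Finset.sum_congr rfl
            intro j _
            rw [Finset.sum_const, nsmul_eq_mul]
            simp only [hpdef]
            ring
  have hswap : ∑ i, ∑ j : X i, -(p i j * Real.log (p i j))
      = -(∑ i, ∑ j : X i, (p i j * Real.log (p i j))) := by
    simp
  rw [h2] at h1
  have hfin : Real.log N ≤ ∑ i, ∑ j : X i, -(p i j * Real.log (p i j)) := by
    rw [hswap]; linarith
  exact hfin

open Finset

private lemma g_nonneg' {t : ℝ} (ht : 0 ≤ t) : 0 ≤ t * Real.log t - t + 1 := by
  rcases eq_or_lt_of_le ht with h | h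
  · simp [← h]
  · have h1 := Real.log_le_sub_one_of_pos (inv_pos.mpr h)
    rw [Real.log_inv] at h1
    have h2 : t * t⁻¹ = 1 := mul_inv_cancel₀ h.ne'
    nlinarith [mul_le_mul_of_nonneg_left h1 h.le]

private lemma T_nonneg {c p : ℝ} (hc : 0 < c) (hp : 0 ≤ p) :
    0 ≤ p * Real.log (c * p) - p + 1 / c := by
  have h := g_nonneg' (t := c * p) (by positivity)
  have he : p * Real.log (c * p) - p + 1 / c
      = (1 / c) * ((c * p) * Real.log (c * p) - (c * p) + 1) := by
    field_simp
  rw [he]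
  exact mul_nonneg (by positivity) h

private lemma T_ge {c p εv : ℝ} (hc : 0 < c) (hp : 0 ≤ p)
    (hg : εv ≤ (c * p) * Real.log (c * p) - (c * p) + 1) :
    εv / c ≤ p * Real.log (c * p) - p + 1 / c := by
  have he : p * Real.log (c * p) - p + 1 / c
      = (1 / c) * ((c * p) * Real.log (c * p) - (c * p) + 1) := by
    field_simp
  calc εv / c = (1 / c) * εv := by ring
    _ ≤ (1 / c) * ((c * p) * Real.log (c * p) - (c * p) + 1) :=
        mul_le_mul_of_nonneg_left hg (by positivity)
    _ = _ := he.symm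

private lemma entropy_decomp {J : Type} [Fintype J] [Nonempty J] (p : J → ℝ)
    (hp0 : ∀ j, 0 ≤ p j) (hps : ∑ j, p j = 1) :
    ∑ j, -(p j * Real.log (p j))
      = Real.log (Fintype.card J)
        - ∑ j, (p j * Real.log ((Fintype.card J : ℝ) * p j) - p j
            + 1 / (Fintype.card J : ℝ)) := by
  set c : ℝ := (Fintype.card J : ℝ) with hc
  have hcpos : 0 < c := by
    rw [hc]; exact_mod_cast Fintype.card_pos
  have hterm : ∀ j, p j * Real.log (c * p j)
      = p j * Real.log c + p j * Real.log (p j) := by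
    intro j
    rcases eq_or_lt_of_le (hp0 j) with h | h
    · simp [← h]
    · rw [Real.log_mul hcpos.ne' h.ne']; ring
  have hT : ∑ j, (p j * Real.log (c * p j) - p j + 1 / c)
      = Real.log c + ∑ j, p j * Real.log (p j) := by
    calc ∑ j, (p j * Real.log (c * p j) - p j + 1 / c)
        = ∑ j, (p j * Real.log c + p j * Real.log (p j) - p j + 1 / c) := by
          exact Finset.sum_congr rfl fun j _ => by rw [hterm j]
      _ = ((∑ j, p j * Real.log c) + (∑ j, p j * Real.log (p j)) - ∑ j, p j)
            + ∑ _j : J, (1 : ℝ) / c := by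
          rw [← Finset.sum_add_distrib, ← Finset.sum_sub_distrib, ← Finset.sum_add_distrib]
      _ = Real.log c + ∑ j, p j * Real.log (p j) := by
          rw [← Finset.sum_mul, hps, Finset.sum_const, Finset.card_univ, nsmul_eq_mul,
            ← hc, mul_one_div, div_self hcpos.ne']
          ring
  rw [hT, Finset.sum_neg_distrib]
  ring

open Finset

private lemma final_arith {k βr mr qr ε : ℝ} (hε : 0 < ε) (hq1 : 1 ≤ qr) (hk0 : 0 ≤ k)
    (hm0 : 0 ≤ mr) (hβ : 0 < βr) (h : k * ε * (qr + 1) ≤ βr * ε * mr * qr) :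
    k ≤ βr * mr := by
  have h2 : ε * (k * (qr + 1)) ≤ ε * (βr * mr * qr) := by nlinarith [h]
  have h3 : k * (qr + 1) ≤ βr * mr * qr := le_of_mul_le_mul_left h2 hε
  nlinarith [h3, hk0, hm0, hβ, hq1]

/-- Razborov-style unbiasedness lemma (as used by Rothvoss): for every
`α, β > 0` and `q` there is `δ > 0` such that for any product `X = X₁ × ⋯ × X_m`
of nonempty sets of size at most `q` and any `Y ⊆ X` with
`|Y| ≥ 2^{-δm}|X|`, at most `βm` coordinates `i` are `α`-biased, i.e. fail
`(1/(1+α))·Pr[y∈Y] ≤ Pr[y∈Y ∣ y_i = j] ≤ (1+α)·Pr[y∈Y]` for some `j ∈ X_i`. -/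
theorem stmt8 (α β : ℝ) (hα : 0 < α) (hβ : 0 < β) (q : ℕ) :
    ∃ δ : ℝ, 0 < δ ∧
      ∀ (m : ℕ) (X : Fin m → Type) [∀ i, Fintype (X i)] [∀ i, DecidableEq (X i)]
        [∀ i, Nonempty (X i)],
        (∀ i, Fintype.card (X i) ≤ q) →
        ∀ Y : Finset (∀ i, X i),
          (2 : ℝ) ^ (-(δ * m)) * Fintype.card (∀ i, X i) ≤ Y.card →
          ({i : Fin m |
              ¬ ∀ j : X i,
                (1 / (1 + α)) * ((Y.card : ℝ) / Fintype.card (∀ i, X i)) ≤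
                    ((Y.filter (fun y => y i = j)).card : ℝ) /
                      ((Finset.univ.filter (fun y : ∀ i, X i => y i = j)).card) ∧
                  ((Y.filter (fun y => y i = j)).card : ℝ) /
                      ((Finset.univ.filter (fun y : ∀ i, X i => y i = j)).card) ≤
                    (1 + α) * ((Y.card : ℝ) / Fintype.card (∀ i, X i))}.ncard : ℝ)
            ≤ β * m := by
  classical
  have h1α : (0:ℝ) < 1 + α := by linarith
  have hinvlt : 1 / (1 + α) < 1 := by rw [div_lt_one h1α]; linarith
  have hinvpos : 0 < 1 / (1 + α) := by positivity
  set ε : ℝ := min ((1 + α) * Real.log (1 + α) - (1 + α) + 1)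
      ((1 / (1 + α)) * Real.log (1 / (1 + α)) - (1 / (1 + α)) + 1) with hεdef
  have hεpos : 0 < ε := by
    apply lt_min
    · exact g_pos h1α (by linarith)
    · exact g_pos hinvpos hinvlt.ne
  have hlog2 : (0:ℝ) < Real.log 2 := Real.log_pos one_lt_two
  refine ⟨β * ε / ((q + 1) * Real.log 2), by positivity, ?_⟩
  set δ : ℝ := β * ε / ((q + 1) * Real.log 2) with hδdef
  intro m X instF instD instN hq Y hY
  have hNE : Nonempty (∀ i, X i) := ⟨fun i => Classical.arbitrary _⟩
  have hC : (0:ℝ) < (Fintype.card (∀ i, X i) : ℝ) := by exact_mod_cast Fintype.card_pos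
  have hN : (0:ℝ) < (Y.card : ℝ) :=
    lt_of_lt_of_le (by positivity) hY
  have hYne : Y.Nonempty := Finset.card_pos.mp (by exact_mod_cast hN)
  have hc : ∀ i, (0:ℝ) < (Fintype.card (X i) : ℝ) := fun i => by
    exact_mod_cast Fintype.card_pos
  -- abbreviations
  set N : ℝ := (Y.card : ℝ) with hNdef
  set C : ℝ := (Fintype.card (∀ i, X i) : ℝ) with hCdef
  set p : ∀ i, X i → ℝ := fun i j => ((Y.filter fun y => y i = j).card : ℝ) / N with hpdef
  set c : Fin m → ℝ := fun i => (Fintype.card (X i) : ℝ) with hcdef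
  have hp0 : ∀ (i) (j : X i), 0 ≤ p i j := fun i j => by
    rw [hpdef]; positivity
  have hpsum : ∀ i, ∑ j : X i, p i j = 1 := by
    intro i
    have hcard : ∑ j : X i, ((Y.filter fun y => y i = j).card : ℝ) = N := by
      rw [hNdef, ← Nat.cast_sum]
      congr 1
      exact (Finset.card_eq_sum_card_fiberwise (fun y _ => Finset.mem_univ (y i))).symm
    simp only [hpdef]
    rw [← Finset.sum_div, hcard, div_self hN.ne']
  -- the equivalence between the stated condition and the `t`-condition
  have hfc : ∀ (i : Fin m) (j : X i),
      (((Finset.univ.filter fun y : ∀ k, X k => y i = j).card : ℝ)) * c i = C := by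
    intro i j
    simp only [hcdef, hCdef]
    exact_mod_cast fiber_card X i j
  have hiff : ∀ (i : Fin m) (j : X i),
      ((1 / (1 + α)) * ((Y.card : ℝ) / Fintype.card (∀ i, X i)) ≤
          ((Y.filter (fun y => y i = j)).card : ℝ) /
            ((Finset.univ.filter (fun y : ∀ i, X i => y i = j)).card) ∧
        ((Y.filter (fun y => y i = j)).card : ℝ) /
            ((Finset.univ.filter (fun y : ∀ i, X i => y i = j)).card) ≤
          (1 + α) * ((Y.card : ℝ) / Fintype.card (∀ i, X i)))
      ↔ (1 / (1 + α) ≤ c i * p i j ∧ c i * p i j ≤ 1 + α) := by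
    intro i j
    have hD : (0:ℝ) < ((Finset.univ.filter fun y : ∀ k, X k => y i = j).card : ℝ) := by
      have h := hfc i j
      nlinarith [hc i, hC]
    have hratio : ((Y.filter (fun y => y i = j)).card : ℝ) /
        ((Finset.univ.filter (fun y : ∀ k, X k => y i = j)).card : ℝ)
        = (c i * p i j) * (N / C) := by
      have h := hfc i j
      rw [hpdef]
      simp only
      field_simp
      nlinarith [h]
    have hNC : (0:ℝ) < N / C := div_pos hN hC
    constructor
    · rintro ⟨h1, h2⟩
      rw [hratio] at h1 h2
      constructor
      · exact (mul_le_mul_iff_of_pos_right hNC).mp h1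
      · exact (mul_le_mul_iff_of_pos_right hNC).mp h2
    · rintro ⟨h1, h2⟩
      rw [hratio]
      exact ⟨(mul_le_mul_iff_of_pos_right hNC).mpr h1, (mul_le_mul_iff_of_pos_right hNC).mpr h2⟩
  -- biased set as a finset
  set B : Finset (Fin m) :=
    Finset.univ.filter (fun i => ¬ ∀ j : X i, 1 / (1 + α) ≤ c i * p i j ∧ c i * p i j ≤ 1 + α)
    with hBdef
  have hseteq : {i : Fin m |
      ¬ ∀ j : X i,
        (1 / (1 + α)) * ((Y.card : ℝ) / Fintype.card (∀ i, X i)) ≤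
            ((Y.filter (fun y => y i = j)).card : ℝ) /
              ((Finset.univ.filter (fun y : ∀ i, X i => y i = j)).card) ∧
          ((Y.filter (fun y => y i = j)).card : ℝ) /
              ((Finset.univ.filter (fun y : ∀ i, X i => y i = j)).card) ≤
            (1 + α) * ((Y.card : ℝ) / Fintype.card (∀ i, X i))} = (B : Set (Fin m)) := by
    ext i
    simp only [hBdef, Finset.coe_filter, Finset.mem_univ, true_and, Set.mem_setOf_eq]
    exact not_congr (forall_congr' fun j => hiff i j)
  rw [hseteq, Set.ncard_coe_finset]
  -- entropy chain
  have hsub : Real.log N ≤ ∑ i, ∑ j : X i, -(p i j * Real.log (p i j)) := subadd Y hYne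
  have hdec : ∀ i, ∑ j : X i, -(p i j * Real.log (p i j))
      = Real.log (c i) - ∑ j : X i, (p i j * Real.log (c i * p i j) - p i j + 1 / c i) := by
    intro i
    exact entropy_decomp (p i) (hp0 i) (hpsum i)
  have hlogC : ∑ i, Real.log (c i) = Real.log C := by
    have hprod : C = ∏ i, c i := by
      simp only [hCdef, hcdef, Fintype.card_pi, Nat.cast_prod]
    rw [hprod, Real.log_prod (fun i _ => (hc i).ne')]
  have hTsum : ∑ i, ∑ j : X i, (p i j * Real.log (c i * p i j) - p i j + 1 / c i)
      ≤ Real.log C - Real.log N := by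
    have h := hsub
    rw [Finset.sum_congr rfl (fun i _ => hdec i), Finset.sum_sub_distrib, hlogC] at h
    linarith
  have hlogN : Real.log C - δ * m * Real.log 2 ≤ Real.log N := by
    have h := Real.log_le_log (mul_pos (Real.rpow_pos_of_pos two_pos _) hC) hY
    rw [Real.log_mul (Real.rpow_pos_of_pos two_pos _).ne' hC.ne',
      Real.log_rpow two_pos] at h
    linarith
  have hTδ : ∑ i, ∑ j : X i, (p i j * Real.log (c i * p i j) - p i j + 1 / c i)
      ≤ δ * m * Real.log 2 := by linarith
  have hTnn : ∀ (i) (j : X i), 0 ≤ p i j * Real.log (c i * p i j) - p i j + 1 / c i :=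
    fun i j => T_nonneg (hc i) (hp0 i j)
  -- bound the biased sum
  rcases B.eq_empty_or_nonempty with hBe | ⟨i0, hi0⟩
  · rw [hBe]
    simp
    positivity
  · have hq1 : (1:ℝ) ≤ (q:ℝ) := by
      have h1 : 1 ≤ Fintype.card (X i0) := Fintype.card_pos
      have h2 := hq i0
      exact_mod_cast le_trans h1 h2
    have hqpos : (0:ℝ) < q := by linarith
    have hTB : ∀ i ∈ B, ε / q ≤ ∑ j : X i, (p i j * Real.log (c i * p i j) - p i j + 1 / c i) := by
      intro i hi
      rw [hBdef, Finset.mem_filter] at hi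
      have hbias := hi.2
      push_neg at hbias
      obtain ⟨j, hj⟩ := hbias
      have hj : c i * p i j < 1 / (1 + α) ∨ 1 + α < c i * p i j := by
        rcases lt_or_ge (c i * p i j) (1 / (1 + α)) with h | h
        · exact Or.inl h
        · exact Or.inr (hj h)
      have hgj : ε ≤ (c i * p i j) * Real.log (c i * p i j) - (c i * p i j) + 1 := by
        rcases hj with hj | hj
        · have hmem1 : c i * p i j ∈ Set.Icc (0:ℝ) 1 := by
            exact ⟨mul_nonneg (hc i).le (hp0 i j), by linarith⟩
          have hmem2 : (1 / (1 + α)) ∈ Set.Icc (0:ℝ) 1 := ⟨hinvpos.le, hinvlt.le⟩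
          have := g_anti hmem1 hmem2 hj.le
          calc ε ≤ (1 / (1 + α)) * Real.log (1 / (1 + α)) - (1 / (1 + α)) + 1 :=
                min_le_right _ _
            _ ≤ _ := this
        · have hmem1 : (1 + α) ∈ Set.Ici (1:ℝ) := by simp; linarith
          have hmem2 : c i * p i j ∈ Set.Ici (1:ℝ) := by simp; linarith
          have := g_mono hmem1 hmem2 hj.le
          calc ε ≤ (1 + α) * Real.log (1 + α) - (1 + α) + 1 := min_le_left _ _
            _ ≤ _ := this
      have hT1 : ε / c i ≤ p i j * Real.log (c i * p i j) - p i j + 1 / c i :=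
        T_ge (hc i) (hp0 i j) hgj
      have hT2 : ε / q ≤ ε / c i := by
        apply div_le_div_of_nonneg_left hεpos.le (hc i)
        exact_mod_cast hq i
      calc ε / q ≤ p i j * Real.log (c i * p i j) - p i j + 1 / c i := le_trans hT2 hT1
        _ ≤ ∑ j : X i, (p i j * Real.log (c i * p i j) - p i j + 1 / c i) :=
            Finset.single_le_sum (fun j _ => hTnn i j) (Finset.mem_univ j)
    have hBsum : (B.card : ℝ) * (ε / q)
        ≤ ∑ i, ∑ j : X i, (p i j * Real.log (c i * p i j) - p i j + 1 / c i) := by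
      calc (B.card : ℝ) * (ε / q) = ∑ _i ∈ B, (ε / q) := by
            rw [Finset.sum_const, nsmul_eq_mul]
        _ ≤ ∑ i ∈ B, ∑ j : X i, (p i j * Real.log (c i * p i j) - p i j + 1 / c i) :=
            Finset.sum_le_sum hTB
        _ ≤ ∑ i, ∑ j : X i, (p i j * Real.log (c i * p i j) - p i j + 1 / c i) :=
            Finset.sum_le_sum_of_subset_of_nonneg (Finset.subset_univ B)
              (fun i _ _ => Finset.sum_nonneg fun j _ => hTnn i j)
    have hfinal : (B.card : ℝ) * (ε / q) ≤ β * ε * m / (q + 1) := by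
      have hδval : δ * m * Real.log 2 = β * ε * m / (q + 1) := by
        rw [hδdef]
        field_simp
      linarith
    -- conclude
    have hkq : (B.card : ℝ) * ε * ((q:ℝ) + 1) ≤ β * ε * m * q := by
      rw [← mul_div_assoc] at hfinal
      rw [div_le_div_iff₀ hqpos (by linarith)] at hfinal
      linarith
    exact final_arith hεpos hq1 (Nat.cast_nonneg _) (Nat.cast_nonneg _) hβ hkq
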